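/- Let α > 0 and β > 0 be real numbers and define, for z ∈ ℂ with z ≠ 0 and z ≠ 1, the 2×2 complex matrices A(z) = [[1, α⁻¹z⁻¹],[α, 1]] and B(z) = (1−z⁻¹)⁻¹·[[1, β⁻¹z⁻¹],[β, 1]]. Then for all z₁, z₂ ∈ ℂ∖{0, 1}: B(z₂)·B(z₁)⁻¹ − A(z₂)⁻¹·A(z₁) = ((z₁−z₂)/(z₁z₂)) · ((α⁻¹+β⁻¹)/(1−z₂⁻¹)) · [[0,1],[0,0]]. -/

import Mathlib

open Matrix Complex

set_option maxHeartbeats 1600000 in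
/-- Telescoping identity: with `A(z) = [[1, α⁻¹z⁻¹],[α, 1]]` and
`B(z) = (1−z⁻¹)⁻¹·[[1, β⁻¹z⁻¹],[β, 1]]`, for all `z₁, z₂ ∉ {0, 1}`:
`B(z₂)B(z₁)⁻¹ − A(z₂)⁻¹A(z₁) = ((z₁−z₂)/(z₁z₂))·((α⁻¹+β⁻¹)/(1−z₂⁻¹))·[[0,1],[0,0]]`. -/
theorem stmt17 (α β : ℝ) (hα : 0 < α) (hβ : 0 < β)
    (A B : ℂ → Matrix (Fin 2) (Fin 2) ℂ)
    (hA : ∀ z : ℂ, A z = !![1, (α : ℂ)⁻¹ * z⁻¹; (α : ℂ), 1])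
    (hB : ∀ z : ℂ, B z = (1 - z⁻¹)⁻¹ • !![1, (β : ℂ)⁻¹ * z⁻¹; (β : ℂ), 1])
    (z₁ z₂ : ℂ) (h₁0 : z₁ ≠ 0) (h₁1 : z₁ ≠ 1) (h₂0 : z₂ ≠ 0) (h₂1 : z₂ ≠ 1) :
    B z₂ * (B z₁)⁻¹ - (A z₂)⁻¹ * A z₁
      = (((z₁ - z₂) / (z₁ * z₂)) * (((α : ℂ)⁻¹ + (β : ℂ)⁻¹) / (1 - z₂⁻¹))) •
          !![0, 1; 0, 0] := by
  have hαC : (α : ℂ) ≠ 0 := by exact_mod_cast hα.ne'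
  have hβC : (β : ℂ) ≠ 0 := by exact_mod_cast hβ.ne'
  have hs1 : z₁ - 1 ≠ 0 := sub_ne_zero.mpr h₁1
  have hs2 : z₂ - 1 ≠ 0 := sub_ne_zero.mpr h₂1
  have he : ∀ z : ℂ, z ≠ 0 → (1 - z⁻¹) = (z - 1) / z := by
    intro z hz0; field_simp
  have hd : ∀ z : ℂ, z ≠ 0 → z - 1 ≠ 0 → (1 - z⁻¹) ≠ 0 := by
    intro z hz0 hz1
    rw [he z hz0]
    exact div_ne_zero hz1 hz0
  have hd1 := hd z₁ h₁0 hs1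
  have hd2 := hd z₂ h₂0 hs2
  have hBinv : (B z₁)⁻¹ = !![1, -((β : ℂ)⁻¹ * z₁⁻¹); -(β : ℂ), 1] := by
    apply inv_eq_right_inv
    rw [hB]
    ext i j
    fin_cases i <;> fin_cases j <;>
      simp [Matrix.mul_apply, Fin.sum_univ_two, Matrix.smul_apply] <;>
      rw [he z₁ h₁0] <;> field_simp <;> ring
  have hAinv : (A z₂)⁻¹ = (1 - z₂⁻¹)⁻¹ • !![1, -((α : ℂ)⁻¹ * z₂⁻¹); -(α : ℂ), 1] := by
    apply inv_eq_right_inv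
    rw [hA]
    ext i j
    fin_cases i <;> fin_cases j <;>
      simp [Matrix.mul_apply, Fin.sum_univ_two, Matrix.smul_apply] <;>
      rw [he z₂ h₂0] <;> field_simp <;> ring
  rw [hBinv, hAinv, hA, hB, he z₂ h₂0]
  ext i j
  fin_cases i <;> fin_cases j <;>
    simp [Matrix.mul_apply, Fin.sum_univ_two, Matrix.smul_apply, Matrix.sub_apply, inv_div]
  · field_simp; ring
  · rw [div_div_eq_mul_div]
    have key : z₂⁻¹ - z₁⁻¹ = (z₁ - z₂) / (z₁ * z₂) := by field_simp
    rw [div_eq_mul_inv (z₂ : ℂ) (z₂ - 1), div_eq_mul_inv _ (z₂ - 1)]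
    linear_combination (z₂ * (z₂ - 1)⁻¹ * ((α : ℂ)⁻¹ + (β : ℂ)⁻¹)) * key
  · field_simp; ring
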